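/- Let N ≥ 4 and let H be the N×N real symmetric matrix with entries H_{ij} = −cos(2π(i−j)/N) − 1/(2 − 2cos(2π(i−j)/N)) for i ≠ j and H_{ii} = −∑_{j≠i} H_{ij} (the Hessian of the potential V at the regular N-gon configuration θ_k = 2πk/N). Then H has at least one strictly positive eigenvalue and at least one strictly negative eigenvalue. -/

import Mathlib

open Real Matrix Finset

section NgonAux

open Complex

noncomputable def zz (N : ℕ) : ℂ := Complex.exp (2 * Real.pi * Complex.I / N)

lemma zz_ne_zero (N : ℕ) : zz N ≠ 0 := Complex.exp_ne_zero _

lemma zz_prim {N : ℕ} (h : N ≠ 0) : IsPrimitiveRoot (zz N) N :=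
  Complex.isPrimitiveRoot_exp N h

lemma zz_zpow_eq_one_iff {N : ℕ} (h : N ≠ 0) (t : ℤ) : zz N ^ t = 1 ↔ (N : ℤ) ∣ t :=
  (zz_prim h).zpow_eq_one_iff_dvd t

lemma zz_pow_N {N : ℕ} (h : N ≠ 0) : zz N ^ (N : ℤ) = 1 := by
  rw [zz_zpow_eq_one_iff h]

lemma zz_pow_N' {N : ℕ} (h : N ≠ 0) : zz N ^ N = 1 := by
  have := zz_pow_N h; rwa [_root_.zpow_natCast] at this

lemma zz_zpow_congr {N : ℕ} (h : N ≠ 0) {a b : ℤ} (hab : (N : ℤ) ∣ (a - b)) :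
    zz N ^ a = zz N ^ b := by
  obtain ⟨t, ht⟩ := hab
  have ha : a = b + N * t := by linarith
  rw [ha, zpow_add₀ (zz_ne_zero N), _root_.zpow_mul, zz_pow_N h, _root_.one_zpow, mul_one]

lemma zz_pow_mod {N : ℕ} (h : N ≠ 0) (a : ℕ) : zz N ^ a = zz N ^ (a % N) := by
  conv_lhs => rw [← Nat.mod_add_div a N]
  rw [pow_add, _root_.pow_mul, zz_pow_N' h, one_pow, mul_one]

lemma zz_pow_congr {N : ℕ} (h : N ≠ 0) {a b : ℕ} (hab : a % N = b % N) :
    zz N ^ a = zz N ^ b := by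
  rw [zz_pow_mod h a, zz_pow_mod h b, hab]

lemma not_dvd_small {N : ℕ} (h4 : 4 ≤ N) {t : ℤ} (h0 : t ≠ 0) (h3 : |t| ≤ 3) :
    ¬ (N : ℤ) ∣ t := by
  intro hd
  have h1 : (N : ℤ) ∣ |t| := (dvd_abs _ _).mpr hd
  have := Int.le_of_dvd (abs_pos.mpr h0) h1
  omega

lemma S_eq {N : ℕ} [NeZero N] (h4 : 4 ≤ N) {t : ℤ} (h0 : t ≠ 0) (h3 : |t| ≤ 3) :
    ∑ d ∈ (univ : Finset (Fin N)).erase 0, zz N ^ (t * ((d : ℕ) : ℤ)) = -1 := by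
  have hN : N ≠ 0 := by omega
  have hne : zz N ^ t ≠ 1 := by
    simp only [ne_eq, zz_zpow_eq_one_iff hN]
    exact not_dvd_small h4 h0 h3
  have huniv : ∑ d : Fin N, zz N ^ (t * ((d : ℕ) : ℤ)) = 0 := by
    have he : ∀ d : Fin N, zz N ^ (t * ((d : ℕ) : ℤ)) = (zz N ^ t) ^ (d : ℕ) := by
      intro d; rw [_root_.zpow_mul, _root_.zpow_natCast]
    rw [Finset.sum_congr rfl fun d _ => he d, Fin.sum_univ_eq_sum_range]
    rw [geom_sum_eq hne]
    have hone : (zz N ^ t) ^ N = 1 := by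
      rw [← _root_.zpow_natCast, ← _root_.zpow_mul, mul_comm, _root_.zpow_mul, zz_pow_N hN, _root_.one_zpow]
    rw [hone]; simp
  have key := Finset.sum_erase_add univ
      (fun d : Fin N => zz N ^ (t * ((d : ℕ) : ℤ))) (mem_univ (0 : Fin N))
  rw [huniv] at key
  have hz : zz N ^ (t * (((0 : Fin N) : ℕ) : ℤ)) = 1 := by simp
  simp only [hz] at key
  linear_combination key

noncomputable def FF (N m : ℕ) (d : Fin N) : ℂ :=
  (-(zz N ^ (d : ℕ) + (zz N ^ (d : ℕ))⁻¹) / 2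
      - 1 / (2 - (zz N ^ (d : ℕ) + (zz N ^ (d : ℕ))⁻¹))) * ((zz N ^ (d : ℕ)) ^ m - 1)

lemma zz_pow_ne_one {N : ℕ} [NeZero N] {d : Fin N} (hd : d ≠ 0) :
    zz N ^ (d : ℕ) ≠ 1 := by
  have h0 : 0 < (d : ℕ) := by
    rcases Nat.eq_zero_or_pos (d : ℕ) with h | h
    · exact absurd (Fin.ext (by simp [h])) hd
    · exact h
  exact (zz_prim (NeZero.ne N)).pow_ne_one_of_pos_of_lt h0.ne' d.isLt

lemma zz_den_ne {N : ℕ} [NeZero N] {d : Fin N} (hd : d ≠ 0) :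
    2 - (zz N ^ (d : ℕ) + (zz N ^ (d : ℕ))⁻¹) ≠ 0 := by
  set x := zz N ^ (d : ℕ) with hx
  have hx0 : x ≠ 0 := pow_ne_zero _ (zz_ne_zero N)
  have hx1 : x ≠ 1 := zz_pow_ne_one hd
  intro h
  apply hx1
  have h2 : (x - 1) ^ 2 = 0 := by
    field_simp at h
    linear_combination -h
  have := pow_eq_zero_iff (n := 2) (by norm_num) |>.mp h2
  linear_combination this

-- the complex cos in terms of zz
lemma cos_cast {N : ℕ} (h : N ≠ 0) (a b : ℕ) :
    Complex.cos (2 * (Real.pi : ℂ) * ((a : ℂ) - (b : ℂ)) / N)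
      = (zz N ^ ((a : ℤ) - (b : ℤ)) + zz N ^ ((b : ℤ) - (a : ℤ))) / 2 := by
  have hcos : Complex.cos (2 * (Real.pi : ℂ) * ((a : ℂ) - (b : ℂ)) / N)
      = (Complex.exp ((2 * (Real.pi : ℂ) * ((a : ℂ) - (b : ℂ)) / N) * I)
        + Complex.exp (-(2 * (Real.pi : ℂ) * ((a : ℂ) - (b : ℂ)) / N) * I)) / 2 := rfl
  rw [hcos]
  have hN : (N : ℂ) ≠ 0 := by exact_mod_cast h
  have e1 : (2 * (Real.pi : ℂ) * ((a : ℂ) - (b : ℂ)) / N) * I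
      = (((a : ℤ) - (b : ℤ) : ℤ) : ℂ) * (2 * Real.pi * Complex.I / N) := by
    push_cast
    field_simp
  have e2 : -(2 * (Real.pi : ℂ) * ((a : ℂ) - (b : ℂ)) / N) * I
      = (((b : ℤ) - (a : ℤ) : ℤ) : ℂ) * (2 * Real.pi * Complex.I / N) := by
    push_cast
    field_simp
    ring
  rw [e1, e2, Complex.exp_int_mul, Complex.exp_int_mul, zz]

lemma entry_cast {N : ℕ} (h : N ≠ 0) (H : Matrix (Fin N) (Fin N) ℝ)
    (hoff : ∀ i j : Fin N, i ≠ j →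
      H i j = - Real.cos (2 * Real.pi * (((i : ℕ) : ℝ) - ((j : ℕ) : ℝ)) / N)
        - 1 / (2 - 2 * Real.cos (2 * Real.pi * (((i : ℕ) : ℝ) - ((j : ℕ) : ℝ)) / N)))
    {k j : Fin N} (hkj : k ≠ j) :
    ((H k j : ℝ) : ℂ) = -(zz N ^ ((j : ℤ) - (k : ℤ)) + (zz N ^ ((j : ℤ) - (k : ℤ)))⁻¹) / 2
      - 1 / (2 - (zz N ^ ((j : ℤ) - (k : ℤ)) + (zz N ^ ((j : ℤ) - (k : ℤ)))⁻¹)) := by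
  rw [hoff k j hkj]
  push_cast
  rw [cos_cast h (k : ℕ) (j : ℕ)]
  have hy : zz N ^ ((k : ℤ) - (j : ℤ)) = (zz N ^ ((j : ℤ) - (k : ℤ)))⁻¹ := by
    rw [← _root_.zpow_neg, neg_sub]
  rw [hy]
  ring

lemma zz_re (N : ℕ) (n : ℕ) : (zz N ^ n).re = Real.cos (2 * Real.pi * n / N) := by
  have h1 : zz N ^ n = Complex.exp (((2 * Real.pi * n / N : ℝ) : ℂ) * I) := by
    rw [zz, ← Complex.exp_nat_mul]
    congr 1
    push_cast
    ring
  rw [h1, Complex.exp_ofReal_mul_I_re]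

lemma eig {N : ℕ} [NeZero N] (h4 : 4 ≤ N) (H : Matrix (Fin N) (Fin N) ℝ)
    (hoff : ∀ i j : Fin N, i ≠ j →
      H i j = - Real.cos (2 * Real.pi * (((i : ℕ) : ℝ) - ((j : ℕ) : ℝ)) / N)
        - 1 / (2 - 2 * Real.cos (2 * Real.pi * (((i : ℕ) : ℝ) - ((j : ℕ) : ℝ)) / N)))
    (hdiag : ∀ i : Fin N, H i i = - ∑ j ∈ Finset.univ.erase i, H i j)
    (m : ℕ) (lam : ℝ)
    (hsum : ∑ d ∈ (univ : Finset (Fin N)).erase 0, FF N m d = (lam : ℂ)) :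
    H.mulVec (fun j : Fin N => Real.cos (2 * Real.pi * ((m * (j : ℕ) : ℕ) : ℝ) / N)) =
      lam • (fun j : Fin N => Real.cos (2 * Real.pi * ((m * (j : ℕ) : ℕ) : ℝ) / N)) := by
  have hN : N ≠ 0 := by omega
  funext k
  have hC : ∑ j : Fin N, ((H k j : ℝ) : ℂ) * zz N ^ (m * (j : ℕ))
      = (lam : ℂ) * zz N ^ (m * (k : ℕ)) := by
    have hdk : ((H k k : ℝ) : ℂ) = -∑ j ∈ univ.erase k, ((H k j : ℝ) : ℂ) := by
      rw [hdiag k]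
      push_cast
      ring
    have hsplit := Finset.sum_erase_add univ
        (fun j : Fin N => ((H k j : ℝ) : ℂ) * zz N ^ (m * (j : ℕ))) (mem_univ k)
    rw [← hsplit]
    beta_reduce
    rw [hdk]
    have hfac : ∑ j ∈ univ.erase k, ((H k j : ℝ) : ℂ) * zz N ^ (m * (j : ℕ))
        + (-∑ j ∈ univ.erase k, ((H k j : ℝ) : ℂ)) * zz N ^ (m * (k : ℕ))
        = ∑ j ∈ univ.erase k,
            ((H k j : ℝ) : ℂ) * (zz N ^ (m * (j : ℕ)) - zz N ^ (m * (k : ℕ))) := by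
      rw [neg_mul, Finset.sum_mul]
      simp only [mul_sub]
      rw [Finset.sum_sub_distrib]
      ring
    rw [hfac]
    have hre : ∑ j ∈ univ.erase k,
          ((H k j : ℝ) : ℂ) * (zz N ^ (m * (j : ℕ)) - zz N ^ (m * (k : ℕ)))
        = ∑ d ∈ univ.erase 0, FF N m d * zz N ^ (m * (k : ℕ)) := by
      refine Finset.sum_nbij' (fun j => j - k) (fun d => d + k) ?_ ?_ ?_ ?_ ?_
      · intro j hj
        rw [mem_erase] at hj
        rw [mem_erase]
        refine ⟨?_, mem_univ _⟩
        simpa [sub_eq_zero] using hj.1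
      · intro d hd
        rw [mem_erase] at hd
        rw [mem_erase]
        refine ⟨?_, mem_univ _⟩
        simpa [add_eq_right] using hd.1
      · intro j _; exact sub_add_cancel j k
      · intro d _; exact add_sub_cancel_right d k
      · intro j hj
        beta_reduce
        rw [mem_erase] at hj
        -- rewrite j as (j - k) + k
        set d := j - k with hdj
        have hjd : j = d + k := by rw [hdj, sub_add_cancel]
        have hd0 : d ≠ 0 := by
          rw [hdj, ne_eq, sub_eq_zero]; exact hj.1
        have hkj : k ≠ j := fun h => hj.1 h.symm
        set x := zz N ^ (d : ℕ) with hxdef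
        -- entry
        have he : ((H k j : ℝ) : ℂ) = -(x + x⁻¹) / 2 - 1 / (2 - (x + x⁻¹)) := by
          rw [entry_cast hN H hoff hkj]
          have hX : zz N ^ ((j : ℤ) - (k : ℤ)) = x := by
            rw [hxdef, ← _root_.zpow_natCast]
            apply zz_zpow_congr hN
            have hval : ((d : ℕ) + (k : ℕ)) % N = (j : ℕ) := by
              rw [hjd, Fin.val_add]
            obtain ⟨q, hq⟩ : ∃ q : ℕ, N * q + (j : ℕ) = (d : ℕ) + (k : ℕ) := by
              refine ⟨((d : ℕ) + (k : ℕ)) / N, ?_⟩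
              rw [← hval]
              exact Nat.div_add_mod _ _
            refine ⟨-(q : ℤ), ?_⟩
            rw [mul_neg]
            omega
          rw [hX]
        -- exponent
        have hE : zz N ^ (m * (j : ℕ)) = x ^ m * zz N ^ (m * (k : ℕ)) := by
          have hval : (j : ℕ) = ((d : ℕ) + (k : ℕ)) % N := by
            rw [hjd, Fin.val_add]
          rw [hval]
          have hmod : (m * (((d : ℕ) + (k : ℕ)) % N)) % N
              = (m * ((d : ℕ) + (k : ℕ))) % N :=
            (Nat.mod_modEq ((d : ℕ) + (k : ℕ)) N).mul_left m
          rw [zz_pow_congr hN hmod, Nat.mul_add, pow_add, hxdef, ← _root_.pow_mul,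
            mul_comm ((d : ℕ)) m]
        rw [he, hE, FF]
        ring
    rw [hre, ← Finset.sum_mul, hsum]
  -- take real parts
  have hRe := congrArg Complex.re hC
  rw [Complex.re_sum] at hRe
  simp only [Complex.mul_re, Complex.ofReal_re, Complex.ofReal_im, zz_re,
    zero_mul, sub_zero] at hRe
  show ∑ j : Fin N, H k j * Real.cos (2 * Real.pi * ((m * (j : ℕ) : ℕ) : ℝ) / N)
      = lam * Real.cos (2 * Real.pi * ((m * (k : ℕ) : ℕ) : ℝ) / N)
  exact hRe
lemma pair_m1 (x : ℂ) (hx0 : x ≠ 0) (hden : 2 - (x + x⁻¹) ≠ 0) :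
    (-(x + x⁻¹)/2 - 1/(2 - (x + x⁻¹))) * (x ^ 1 - 1)
      + (-(x⁻¹ + x⁻¹⁻¹)/2 - 1/(2 - (x⁻¹ + x⁻¹⁻¹))) * ((x⁻¹) ^ 1 - 1)
      = x + x⁻¹ - (x ^ 2 + (x ^ 2)⁻¹)/2 := by
  rw [inv_inv, ← inv_pow]
  have hu : x * x⁻¹ = 1 := mul_inv_cancel₀ hx0
  have hw : (2 - (x + x⁻¹)) * (2 - (x + x⁻¹))⁻¹ = 1 := mul_inv_cancel₀ hden
  linear_combination hw - hu

lemma pair_m2 (x : ℂ) (hx0 : x ≠ 0) (hden : 2 - (x + x⁻¹) ≠ 0) :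
    (-(x + x⁻¹)/2 - 1/(2 - (x + x⁻¹))) * (x ^ 2 - 1)
      + (-(x⁻¹ + x⁻¹⁻¹)/2 - 1/(2 - (x⁻¹ + x⁻¹⁻¹))) * ((x⁻¹) ^ 2 - 1)
      = -(x ^ 3 + (x ^ 3)⁻¹)/2 + 3/2 * (x + x⁻¹) + 2 := by
  rw [inv_inv, ← inv_pow]
  have hu : x * x⁻¹ = 1 := mul_inv_cancel₀ hx0
  have hw : (2 - (x + x⁻¹)) * (2 - (x + x⁻¹))⁻¹ = 1 := mul_inv_cancel₀ hden
  linear_combination ((x + x⁻¹) + 2) * hw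
    + (2 * (2 - (x + x⁻¹))⁻¹ - (x + x⁻¹)/2) * hu

lemma zz_pow_neg_fin {N : ℕ} [NeZero N] (d : Fin N) :
    zz N ^ ((-d : Fin N) : ℕ) = (zz N ^ (d : ℕ))⁻¹ := by
  have hN := NeZero.ne N
  have h : zz N ^ ((-d : Fin N) : ℕ) * zz N ^ (d : ℕ) = 1 := by
    rw [← pow_add]
    have h2 : (((-d : Fin N) : ℕ) + (d : ℕ)) % N = 0 % N := by
      have h3 := Fin.val_add (-d) d
      rw [neg_add_cancel] at h3
      rw [Nat.zero_mod, ← h3]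
      simp
    rw [zz_pow_congr hN h2, pow_zero]
  exact eq_inv_of_mul_eq_one_left h

lemma sum_neg {N : ℕ} [NeZero N] (f : Fin N → ℂ) :
    ∑ d ∈ (univ : Finset (Fin N)).erase 0, f d
      = ∑ d ∈ (univ : Finset (Fin N)).erase 0, f (-d) := by
  refine Finset.sum_nbij' (fun d => -d) (fun d => -d) ?_ ?_ ?_ ?_ ?_
  · intro d hd
    rw [mem_erase] at hd
    rw [mem_erase]
    refine ⟨?_, mem_univ _⟩
    simpa [neg_eq_zero] using hd.1
  · intro d hd
    rw [mem_erase] at hd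
    rw [mem_erase]
    refine ⟨?_, mem_univ _⟩
    simpa [neg_eq_zero] using hd.1
  · intro d _; exact neg_neg d
  · intro d _; exact neg_neg d
  · intro d _
    beta_reduce
    rw [neg_neg]

lemma S_pow {N : ℕ} [NeZero N] (h4 : 4 ≤ N) {t : ℕ} (h0 : t ≠ 0) (h3 : t ≤ 3) :
    ∑ d ∈ (univ : Finset (Fin N)).erase 0, (zz N ^ (d : ℕ)) ^ t = -1 := by
  have he : ∀ d : Fin N, (zz N ^ (d : ℕ)) ^ t = zz N ^ ((t : ℤ) * ((d : ℕ) : ℤ)) := by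
    intro d
    rw [← _root_.pow_mul, ← _root_.zpow_natCast (zz N) (d.1 * t)]
    congr 1
    push_cast
    ring
  rw [Finset.sum_congr rfl fun d _ => he d]
  exact S_eq h4 (by exact_mod_cast h0) (by exact_mod_cast h3)

lemma S_pow_inv {N : ℕ} [NeZero N] (h4 : 4 ≤ N) {t : ℕ} (h0 : t ≠ 0) (h3 : t ≤ 3) :
    ∑ d ∈ (univ : Finset (Fin N)).erase 0, ((zz N ^ (d : ℕ)) ^ t)⁻¹ = -1 := by
  have he : ∀ d : Fin N, ((zz N ^ (d : ℕ)) ^ t)⁻¹ = zz N ^ (-(t : ℤ) * ((d : ℕ) : ℤ)) := by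
    intro d
    rw [← _root_.pow_mul, ← _root_.zpow_natCast (zz N) (d.1 * t), ← _root_.zpow_neg]
    congr 1
    push_cast
    ring
  rw [Finset.sum_congr rfl fun d _ => he d]
  refine S_eq h4 (by simpa using h0) ?_
  rw [abs_neg, Int.abs_natCast]
  exact_mod_cast h3

lemma sum_FF_m1 {N : ℕ} [NeZero N] (h4 : 4 ≤ N) :
    ∑ d ∈ (univ : Finset (Fin N)).erase 0, FF N 1 d = ((-1/2 : ℝ) : ℂ) := by
  have hkey : (2 : ℂ) * ∑ d ∈ (univ : Finset (Fin N)).erase 0, FF N 1 d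
      = ∑ d ∈ (univ : Finset (Fin N)).erase 0, (FF N 1 d + FF N 1 (-d)) := by
    rw [Finset.sum_add_distrib, two_mul]
    congr 1
    exact sum_neg (FF N 1)
  have hpt : ∀ d ∈ (univ : Finset (Fin N)).erase 0,
      FF N 1 d + FF N 1 (-d)
      = (zz N ^ (d : ℕ)) ^ 1 + ((zz N ^ (d : ℕ)) ^ 1)⁻¹
        + (-(1/2 : ℂ)) * ((zz N ^ (d : ℕ)) ^ 2) + (-(1/2 : ℂ)) * ((zz N ^ (d : ℕ)) ^ 2)⁻¹ := by
    intro d hd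
    have hd0 : d ≠ 0 := (mem_erase.mp hd).1
    have hx0 : zz N ^ (d : ℕ) ≠ 0 := pow_ne_zero _ (zz_ne_zero N)
    have hden := zz_den_ne hd0
    rw [FF, FF, zz_pow_neg_fin d, pair_m1 _ hx0 hden]
    ring
  rw [Finset.sum_congr rfl hpt] at hkey
  simp only [Finset.sum_add_distrib, ← Finset.mul_sum] at hkey
  rw [S_pow h4 one_ne_zero (by norm_num), S_pow_inv h4 one_ne_zero (by norm_num),
    S_pow h4 two_ne_zero (by norm_num), S_pow_inv h4 two_ne_zero (by norm_num)] at hkey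
  push_cast
  linear_combination hkey / 2

lemma sum_FF_m2 {N : ℕ} [NeZero N] (h4 : 4 ≤ N) :
    ∑ d ∈ (univ : Finset (Fin N)).erase 0, FF N 2 d = (((N : ℝ) - 2 : ℝ) : ℂ) := by
  have hkey : (2 : ℂ) * ∑ d ∈ (univ : Finset (Fin N)).erase 0, FF N 2 d
      = ∑ d ∈ (univ : Finset (Fin N)).erase 0, (FF N 2 d + FF N 2 (-d)) := by
    rw [Finset.sum_add_distrib, two_mul]
    congr 1
    exact sum_neg (FF N 2)
  have hpt : ∀ d ∈ (univ : Finset (Fin N)).erase 0,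
      FF N 2 d + FF N 2 (-d)
      = (-(1/2 : ℂ)) * ((zz N ^ (d : ℕ)) ^ 3) + (-(1/2 : ℂ)) * ((zz N ^ (d : ℕ)) ^ 3)⁻¹
        + (3/2 : ℂ) * ((zz N ^ (d : ℕ)) ^ 1) + (3/2 : ℂ) * ((zz N ^ (d : ℕ)) ^ 1)⁻¹
        + 2 := by
    intro d hd
    have hd0 : d ≠ 0 := (mem_erase.mp hd).1
    have hx0 : zz N ^ (d : ℕ) ≠ 0 := pow_ne_zero _ (zz_ne_zero N)
    have hden := zz_den_ne hd0
    rw [FF, FF, zz_pow_neg_fin d, pair_m2 _ hx0 hden]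
    ring
  rw [Finset.sum_congr rfl hpt] at hkey
  simp only [Finset.sum_add_distrib, ← Finset.mul_sum, Finset.sum_const] at hkey
  rw [S_pow h4 three_ne_zero (by norm_num), S_pow_inv h4 three_ne_zero (by norm_num),
    S_pow h4 one_ne_zero (by norm_num), S_pow_inv h4 one_ne_zero (by norm_num)] at hkey
  rw [Finset.card_erase_of_mem (mem_univ 0), Finset.card_univ, Fintype.card_fin] at hkey
  have hcard : ((N - 1 : ℕ) • (2 : ℂ)) = ((N : ℂ) - 1) * 2 := by
    rw [nsmul_eq_mul, Nat.cast_sub (by omega)]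
    norm_num
  rw [hcard] at hkey
  push_cast
  linear_combination hkey / 2

end NgonAux

open Finset in
/-- For `N ≥ 4`, the Hessian of the limit potential at the regular `N`-gon,
i.e. the matrix with off-diagonal entries
`H i j = -cos(2π(i-j)/N) - 1/(2 - 2cos(2π(i-j)/N))` and diagonal entries
`H i i = -∑_{j ≠ i} H i j`, has at least one strictly positive and at least one
strictly negative eigenvalue. -/
theorem ngon_hessian_has_pos_and_neg_eigenvalue
    (N : ℕ) (hN : 4 ≤ N) (H : Matrix (Fin N) (Fin N) ℝ)
    (hoff : ∀ i j : Fin N, i ≠ j →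
      H i j = - Real.cos (2 * π * (((i : ℕ) : ℝ) - ((j : ℕ) : ℝ)) / N)
        - 1 / (2 - 2 * Real.cos (2 * π * (((i : ℕ) : ℝ) - ((j : ℕ) : ℝ)) / N)))
    (hdiag : ∀ i : Fin N, H i i = - ∑ j ∈ Finset.univ.erase i, H i j) :
    (∃ (μ : ℝ) (v : Fin N → ℝ), 0 < μ ∧ v ≠ 0 ∧ H.mulVec v = μ • v) ∧
    (∃ (μ : ℝ) (v : Fin N → ℝ), μ < 0 ∧ v ≠ 0 ∧ H.mulVec v = μ • v) := by
  haveI : NeZero N := ⟨by omega⟩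
  have hNr : (4 : ℝ) ≤ (N : ℝ) := by exact_mod_cast hN
  constructor
  · refine ⟨(N : ℝ) - 2,
      (fun j : Fin N => Real.cos (2 * Real.pi * ((2 * (j : ℕ) : ℕ) : ℝ) / N)),
      by linarith, ?_, ?_⟩
    · intro hzero
      have h1 := congrFun hzero (0 : Fin N)
      norm_num at h1
    · exact eig hN H hoff hdiag 2 ((N : ℝ) - 2) (sum_FF_m2 hN)
  · refine ⟨(-1/2 : ℝ),
      (fun j : Fin N => Real.cos (2 * Real.pi * ((1 * (j : ℕ) : ℕ) : ℝ) / N)),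
      by norm_num, ?_, ?_⟩
    · intro hzero
      have h1 := congrFun hzero (0 : Fin N)
      norm_num at h1
    · exact eig hN H hoff hdiag 1 (-1/2 : ℝ) (sum_FF_m1 hN)
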